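/- For the perfect Bose gas, the canonical partition functions satisfy the log-concavity property: Z_V(m+1)/Z_V(m) ≥ Z_V(m+2)/Z_V(m+1) for all m ≥ 0. -/

import Mathlib

open Finset

private lemma bose_conv_step (c : ℕ → ℝ) (a : ℝ) (ha : 0 ≤ a) (hc : ∀ n, 0 < c n)
    (hlc : ∀ n, c n * c (n + 2) ≤ c (n + 1) * c (n + 1)) :
    (∀ n, 0 < ∑ j ∈ range (n + 1), c j * a ^ (n - j)) ∧
    (∀ n, (∑ j ∈ range (n + 1), c j * a ^ (n - j)) * (∑ j ∈ range (n + 3), c j * a ^ (n + 2 - j))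
      ≤ (∑ j ∈ range (n + 2), c j * a ^ (n + 1 - j)) *
        (∑ j ∈ range (n + 2), c j * a ^ (n + 1 - j))) := by
  set d : ℕ → ℝ := fun n => ∑ j ∈ range (n + 1), c j * a ^ (n - j) with hd
  have drec : ∀ n, d (n + 1) = a * d n + c (n + 1) := by
    intro n
    have h1 : d (n + 1) =
        (∑ j ∈ range (n + 1), c j * a ^ (n + 1 - j)) + c (n + 1) * a ^ (n + 1 - (n + 1)) :=
      Finset.sum_range_succ _ _
    have h2 : ∀ j ∈ range (n + 1), c j * a ^ (n + 1 - j) = a * (c j * a ^ (n - j)) := by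
      intro j hj
      have hjn : j ≤ n := Nat.lt_succ_iff.mp (Finset.mem_range.mp hj)
      have h3 : n + 1 - j = (n - j) + 1 := by omega
      rw [h3, pow_succ]; ring
    rw [h1, Finset.sum_congr rfl h2, ← Finset.mul_sum, Nat.sub_self, pow_zero, mul_one]
  have dpos : ∀ n, 0 < d n := by
    intro n
    induction n with
    | zero => simpa [hd] using hc 0
    | succ k ih => rw [drec k]; have := hc (k + 1); nlinarith
  have key : ∀ n, c (n + 2) * d n ≤ c (n + 1) * d (n + 1) := by
    intro n
    induction n with
    | zero =>
      rw [drec 0]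
      have hd0 : d 0 = c 0 := by simp [hd]
      rw [hd0]
      have h0 := hc 0
      have h1 := hc 1
      have h3 : c 0 * c 2 ≤ c 1 * c 1 := hlc 0
      show c 2 * c 0 ≤ c 1 * (a * c 0 + c 1)
      nlinarith [mul_nonneg (mul_nonneg ha h0.le) h1.le]
    | succ k ih =>
      have h1 : c (k + 3) * d k ≤ c (k + 2) * d (k + 1) := by
        have hmul : c (k + 3) * (c (k + 2) * d k) ≤ c (k + 3) * (c (k + 1) * d (k + 1)) :=
          mul_le_mul_of_nonneg_left ih (le_of_lt (hc (k + 3)))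
        have hlc1 : c (k + 1) * c (k + 3) ≤ c (k + 2) * c (k + 2) := hlc (k + 1)
        have h2 : c (k + 3) * (c (k + 1) * d (k + 1)) ≤ c (k + 2) * (c (k + 2) * d (k + 1)) := by
          nlinarith [dpos (k + 1)]
        have h3 : c (k + 2) * (c (k + 3) * d k) ≤ c (k + 2) * (c (k + 2) * d (k + 1)) := by
          nlinarith
        exact le_of_mul_le_mul_left h3 (hc (k + 2))
      show c (k + 3) * d (k + 1) ≤ c (k + 2) * d (k + 2)
      have e1 : d (k + 1) = a * d k + c (k + 1) := drec k
      have e2 : d (k + 2) = a * d (k + 1) + c (k + 2) := drec (k + 1)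
      have e1' : c (k + 3) * d (k + 1) = a * (c (k + 3) * d k) + c (k + 3) * c (k + 1) := by
        rw [e1]; ring
      have e2' : c (k + 2) * d (k + 2) = a * (c (k + 2) * d (k + 1)) + c (k + 2) * c (k + 2) := by
        rw [e2]; ring
      have hlc1 : c (k + 1) * c (k + 3) ≤ c (k + 2) * c (k + 2) := hlc (k + 1)
      have hm : a * (c (k + 3) * d k) ≤ a * (c (k + 2) * d (k + 1)) :=
        mul_le_mul_of_nonneg_left h1 ha
      linarith
  refine ⟨dpos, ?_⟩
  intro n
  show d n * d (n + 2) ≤ d (n + 1) * d (n + 1)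
  have e1 : d (n + 1) = a * d n + c (n + 1) := drec n
  have e2 : d (n + 2) = a * d (n + 1) + c (n + 2) := drec (n + 1)
  have L : d n * d (n + 2) = a * (d n * d (n + 1)) + d n * c (n + 2) := by rw [e2]; ring
  have R : d (n + 1) * d (n + 1) = a * (d n * d (n + 1)) + c (n + 1) * d (n + 1) := by
    nth_rewrite 1 [e1]; ring
  have k1 : c (n + 2) * d n ≤ c (n + 1) * d (n + 1) := key n
  linarith

private lemma bose_summable (a : ℕ → ℝ) (ha : ∀ k, 0 ≤ a k) (hsum : Summable a) (n : ℕ) :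
    Summable (fun g : {f : ℕ →₀ ℕ // f.sum (fun _ m => m) = n} =>
      (g : ℕ →₀ ℕ).prod fun k m => a k ^ m) := by
  have gsum : ∀ N : ℕ, Summable (fun t : Fin N → ℕ => ∏ j, a (t j)) := by
    intro N
    induction N with
    | zero => exact Summable.of_finite
    | succ N ih =>
      have h2 : Summable (fun p : ℕ × (Fin N → ℕ) => a p.1 * ∏ j, a (p.2 j)) := by
        apply Summable.mul_of_nonneg hsum ih (fun k => ha k)
          (fun t => Finset.prod_nonneg fun j _ => ha _)
      have hiff := (Fin.consEquiv (fun _ => ℕ)).summable_iff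
        (f := fun t : Fin (N+1) → ℕ => ∏ j, a (t j))
      rw [← hiff]
      apply h2.congr
      intro p
      have : (∏ j, a ((Fin.consEquiv (fun _ => ℕ)) p j)) = a p.1 * ∏ j, a (p.2 j) := by
        rw [Fin.prod_univ_succ]
        simp [Fin.consEquiv]
      exact this.symm
  set L : {f : ℕ →₀ ℕ // f.sum (fun _ m => m) = n} → List ℕ :=
    fun g => Multiset.sort (Finsupp.toMultiset (g : ℕ →₀ ℕ)) (· ≤ ·) with hL
  have hlen : ∀ g : {f : ℕ →₀ ℕ // f.sum (fun _ m => m) = n}, (L g).length = n := by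
    intro g
    rw [hL]
    rw [Multiset.length_sort, Finsupp.card_toMultiset]
    exact g.prop
  set emb : {f : ℕ →₀ ℕ // f.sum (fun _ m => m) = n} → (Fin n → ℕ) :=
    fun g j => (L g).getD j.1 0 with hemb
  have hinj : Function.Injective emb := by
    intro g g' h
    have hl : L g = L g' := by
      apply List.ext_getElem ((hlen g).trans (hlen g').symm)
      intro i h1 h2
      have hc := congrFun h ⟨i, by rw [← hlen g]; exact h1⟩
      simpa [hemb, List.getD_eq_getElem?_getD, List.getElem?_eq_getElem, h1, h2] using hc
    have hm : Finsupp.toMultiset (g : ℕ →₀ ℕ) = Finsupp.toMultiset (g' : ℕ →₀ ℕ) := by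
      rw [← Multiset.sort_eq (Finsupp.toMultiset (g : ℕ →₀ ℕ)) (· ≤ ·),
        ← Multiset.sort_eq (Finsupp.toMultiset (g' : ℕ →₀ ℕ)) (· ≤ ·)]
      exact congrArg _ hl
    apply Subtype.ext
    ext k
    rw [← Finsupp.count_toMultiset, ← Finsupp.count_toMultiset, hm]
  have hcong : ∀ g : {f : ℕ →₀ ℕ // f.sum (fun _ m => m) = n}, (g : ℕ →₀ ℕ).prod (fun k m => a k ^ m) = ∏ j, a (emb g j) := by
    intro g
    have h1 : (g : ℕ →₀ ℕ).prod (fun k m => a k ^ m) = ((L g).map a).prod := by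
      have h2 : ((L g).map a).prod = (((L g : List ℕ) : Multiset ℕ).map a).prod := by
        simp
      have h3 : ((L g : List ℕ) : Multiset ℕ) = Finsupp.toMultiset (g : ℕ →₀ ℕ) := by
        rw [hL]
        exact Multiset.sort_eq _ _
      rw [h2, h3, Finsupp.toMultiset_map, Finsupp.prod_toMultiset,
        Finsupp.prod_mapDomain_index (fun _ => pow_zero _) (fun _ m₁ m₂ => pow_add _ _ _)]
    rw [h1, ← Fin.prod_univ_fun_getElem (L g) a]
    calc (∏ i : Fin (L g).length, a ((L g)[i.1]))
        = ∏ i : Fin (L g).length, a ((L g).getD ((finCongr (hlen g)) i).1 0) := by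
          apply Finset.prod_congr rfl
          intro i _
          congr 1
          rw [finCongr_apply, Fin.coe_cast]
          exact (List.getD_eq_getElem _ _ i.2).symm
      _ = ∏ j : Fin n, a ((L g).getD j.1 0) :=
          Equiv.prod_comp (finCongr (hlen g)) (fun j => a ((L g).getD j.1 0))
  apply Summable.congr ((gsum n).comp_injective hinj)
  intro g
  exact (hcong g).symm
open Finset PowerSeries

private noncomputable def boseF (a : ℕ → ℝ) (K : ℕ) : PowerSeries ℝ :=
  ∏ k ∈ range K, PowerSeries.mk (fun j => a k ^ j)

private lemma coeff_boseF_succ (a : ℕ → ℝ) (K n : ℕ) :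
    coeff n (boseF a (K + 1)) =
      ∑ j ∈ range (n + 1), coeff j (boseF a K) * a K ^ (n - j) := by
  rw [boseF, Finset.prod_range_succ, ← boseF, PowerSeries.coeff_mul,
    Finset.Nat.sum_antidiagonal_eq_sum_range_succ_mk]
  exact Finset.sum_congr rfl fun j _ => by rw [PowerSeries.coeff_mk]

private lemma coeff_boseF_one (a : ℕ → ℝ) (n : ℕ) :
    coeff n (boseF a 1) = a 0 ^ n := by
  rw [boseF, Finset.prod_range_one, PowerSeries.coeff_mk]

private lemma coeff_boseF_eq_sum (a : ℕ → ℝ) (K n : ℕ) :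
    coeff n (boseF a K) =
      ∑ f ∈ Finset.finsuppAntidiag (range K) n, ∏ k ∈ range K, a k ^ f k := by
  classical
  rw [boseF, PowerSeries.coeff_prod]
  exact Finset.sum_congr rfl fun f _ =>
    Finset.prod_congr rfl fun k _ => by rw [PowerSeries.coeff_mk]

private lemma boseF_pos_logconcave (a : ℕ → ℝ) (ha : ∀ k, 0 < a k) :
    ∀ K, 1 ≤ K → (∀ n, 0 < coeff n (boseF a K)) ∧
      (∀ n, coeff n (boseF a K) * coeff (n + 2) (boseF a K) ≤
        coeff (n + 1) (boseF a K) * coeff (n + 1) (boseF a K)) := by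
  intro K
  induction K with
  | zero => omega
  | succ K ih =>
    intro _
    by_cases hK : 1 ≤ K
    · obtain ⟨hpos, hlc⟩ := ih hK
      have step := bose_conv_step (fun n => coeff n (boseF a K)) (a K) (ha K).le hpos hlc
      constructor
      · intro n
        rw [coeff_boseF_succ]
        exact step.1 n
      · intro n
        rw [coeff_boseF_succ, coeff_boseF_succ, coeff_boseF_succ]
        exact step.2 n
    · have hK0 : K = 0 := by omega
      subst hK0
      constructor
      · intro n
        rw [coeff_boseF_one]
        exact pow_pos (ha 0) n
      · intro n
        rw [coeff_boseF_one, coeff_boseF_one, coeff_boseF_one]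
        apply le_of_eq
        rw [← pow_add, ← pow_add]
        ring_nf



/-- Canonical partition function of the perfect Bose gas: the sum over occupation
sequences (finitely supported functions ℕ → ℕ) with total particle number n of the
Boltzmann weight exp(-β Σ_k n_k E_k). -/
noncomputable def Zcan (β : ℝ) (E : ℕ → ℝ) (n : ℕ) : ℝ :=
  ∑' f : {f : ℕ →₀ ℕ // f.sum (fun _ m => m) = n},
    Real.exp (-β * (f : ℕ →₀ ℕ).sum (fun k m => (m : ℝ) * E k))

/-- Log-concavity of the canonical partition functions of the perfect Bose gas. -/
theorem Zcan_log_concave (β : ℝ) (E : ℕ → ℝ) (hβ : 0 < β)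
    (hE0 : 0 < E 0) (hE01 : E 0 < E 1) (hEmono : Monotone E)
    (hsum : Summable fun k => Real.exp (-β * E k)) (m : ℕ) :
    Zcan β E (m + 2) / Zcan β E (m + 1) ≤ Zcan β E (m + 1) / Zcan β E m := by
  classical
  set a : ℕ → ℝ := fun k => Real.exp (-β * E k) with ha_def
  have hapos : ∀ k, 0 < a k := fun k => Real.exp_pos _
  have hw : ∀ f : ℕ →₀ ℕ,
      Real.exp (-β * f.sum fun k m => (m : ℝ) * E k) = f.prod fun k m => a k ^ m := by
    intro f
    rw [Finsupp.sum, Finset.mul_sum, Real.exp_sum, Finsupp.prod]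
    apply Finset.prod_congr rfl
    intro k _
    rw [show -β * ((f k : ℝ) * E k) = (f k : ℝ) * (-β * E k) by ring]
    exact Real.exp_nat_mul _ _
  have hZ : ∀ n, Zcan β E n = ∑' g : {f : ℕ →₀ ℕ // f.sum (fun _ m => m) = n},
      (g : ℕ →₀ ℕ).prod fun k m => a k ^ m := by
    intro n
    rw [Zcan]
    exact tsum_congr fun g => hw _
  have hsummable : ∀ n, Summable (fun g : {f : ℕ →₀ ℕ // f.sum (fun _ m => m) = n} =>
      (g : ℕ →₀ ℕ).prod fun k m => a k ^ m) :=
    fun n => bose_summable a (fun k => (hapos k).le) hsum n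
  have hhs : ∀ n, HasSum (fun g : {f : ℕ →₀ ℕ // f.sum (fun _ m => m) = n} =>
      (g : ℕ →₀ ℕ).prod fun k m => a k ^ m) (Zcan β E n) := by
    intro n
    rw [hZ n]
    exact (hsummable n).hasSum
  have hZpos : ∀ n, 0 < Zcan β E n := by
    intro n
    rw [hZ n]
    have hmem : ((Finsupp.single 0 n).sum (fun _ m => m)) = n := Finsupp.sum_single_index rfl
    have hterm := Summable.le_tsum (hsummable n) ⟨Finsupp.single 0 n, hmem⟩
      (fun g _ => Finset.prod_nonneg fun k _ => pow_nonneg (hapos k).le _)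
    refine lt_of_lt_of_le ?_ hterm
    show (0 : ℝ) < (Finsupp.single 0 n).prod fun k m => a k ^ m
    rw [Finsupp.prod_single_index (h := fun k m => a k ^ m) (pow_zero (a 0))]
    exact pow_pos (hapos 0) n
  have hTsum : ∀ K n, ∑ g ∈ (Finset.finsuppAntidiag (range K) n).subtype
      (fun f => f.sum (fun _ m => m) = n), (g : ℕ →₀ ℕ).prod (fun k m => a k ^ m)
      = PowerSeries.coeff n (boseF a K) := by
    intro K n
    calc ∑ g ∈ (Finset.finsuppAntidiag (range K) n).subtype
          (fun f => f.sum (fun _ m => m) = n), (g : ℕ →₀ ℕ).prod (fun k m => a k ^ m)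
        = ∑ f ∈ (Finset.finsuppAntidiag (range K) n).filter
            (fun f => f.sum (fun _ m => m) = n), f.prod (fun k m => a k ^ m) :=
          Finset.sum_subtype_eq_sum_filter
            (fun f : ℕ →₀ ℕ => f.prod fun k m => a k ^ m)
      _ = ∑ f ∈ Finset.finsuppAntidiag (range K) n, f.prod (fun k m => a k ^ m) := by
          rw [Finset.filter_true_of_mem (fun f hf => (Finset.mem_finsuppAntidiag'.mp hf).1)]
      _ = ∑ f ∈ Finset.finsuppAntidiag (range K) n, ∏ k ∈ range K, a k ^ f k := by
          apply Finset.sum_congr rfl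
          intro f hf
          exact Finsupp.prod_of_support_subset f (Finset.mem_finsuppAntidiag'.mp hf).2 _
            (fun k _ => pow_zero _)
      _ = PowerSeries.coeff n (boseF a K) := (coeff_boseF_eq_sum a K n).symm
  have htends : ∀ n, Filter.Tendsto (fun K => PowerSeries.coeff n (boseF a K))
      Filter.atTop (nhds (Zcan β E n)) := by
    intro n
    have hT : Filter.Tendsto (fun K => (Finset.finsuppAntidiag (range K) n).subtype
        (fun f => f.sum (fun _ m => m) = n)) Filter.atTop Filter.atTop := by
      apply Filter.tendsto_atTop_finset_of_monotone
      · intro K K' hKK' g hg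
        rw [Finset.mem_subtype, Finset.mem_finsuppAntidiag'] at hg ⊢
        exact ⟨hg.1, hg.2.trans (Finset.range_subset_range.mpr hKK')⟩
      · intro g
        obtain ⟨K, hK⟩ := Finset.exists_nat_subset_range (g : ℕ →₀ ℕ).support
        exact ⟨K, by rw [Finset.mem_subtype, Finset.mem_finsuppAntidiag']; exact ⟨g.prop, hK⟩⟩
    have hcomp := Filter.Tendsto.comp (hhs n) hT
    exact Filter.Tendsto.congr (fun K => hTsum K n) hcomp
  have hineq : ∀ n, Zcan β E n * Zcan β E (n + 2) ≤ Zcan β E (n + 1) * Zcan β E (n + 1) := by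
    intro n
    refine le_of_tendsto_of_tendsto ((htends n).mul (htends (n + 2)))
      ((htends (n + 1)).mul (htends (n + 1))) ?_
    filter_upwards [Filter.eventually_ge_atTop 1] with K hK
    exact (boseF_pos_logconcave a hapos K hK).2 n
  rw [div_le_div_iff₀ (hZpos (m + 1)) (hZpos m)]
  have := hineq m
  nlinarith [hineq m]
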